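/- Let X be an n-by-d real matrix with X^T X invertible, Y in R^n, let x_1 in R^d be nonzero, and let y_1 in R. For lambda > 0 let theta_full(lambda) = (X^T X + lambda^2 x_1 x_1^T)^{-1} (X^T Y + lambda^2 y_1 x_1). Then as lambda tends to infinity, lambda^2 * (<x_1, theta_full(lambda)> - y_1) converges to (x_1^T (X^T X)^{-1} X^T Y - y_1) / (x_1^T (X^T X)^{-1} x_1). -/

import Mathlib

open Matrix Filter

variable {d : ℕ}

lemma vecMulVec_mulVec (w v u : Fin d → ℝ) :
    (vecMulVec w v) *ᵥ u = (v ⬝ᵥ u) • w := by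
  ext i
  simp [mulVec, vecMulVec_apply, dotProduct, Finset.mul_sum, mul_comm, mul_left_comm]

lemma vmv_sandwich (x : Fin d → ℝ) (B : Matrix (Fin d) (Fin d) ℝ) :
    vecMulVec x x * B * vecMulVec x x = (x ⬝ᵥ B *ᵥ x) • vecMulVec x x := by
  ext i j
  simp only [mul_apply, vecMulVec_apply, Matrix.smul_apply, smul_eq_mul, dotProduct, mulVec]
  simp only [Finset.sum_mul, Finset.mul_sum]
  rw [Finset.sum_comm]
  apply Finset.sum_congr rfl; intro k _
  apply Finset.sum_congr rfl; intro l _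
  ring

lemma posDef_of_isUnit {n : ℕ} {X : Matrix (Fin n) (Fin d) ℝ} (hX : IsUnit (Xᵀ * X)) :
    (Xᵀ * X).PosDef := by
  have hpsd : (Xᵀ * X).PosSemidef := by
    have := posSemidef_conjTranspose_mul_self X
    simpa using this
  refine PosDef.of_dotProduct_mulVec_pos hpsd.1 (fun v hv => ?_)
  rcases lt_or_eq_of_le (hpsd.dotProduct_mulVec_nonneg v) with h | h
  · exact h
  · exfalso
    apply hv
    have h0 : (Xᵀ * X) *ᵥ v = 0 := (hpsd.dotProduct_mulVec_zero_iff v).mp h.symm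
    have hdet : IsUnit (Xᵀ * X).det := (isUnit_iff_isUnit_det _).mp hX
    calc v = ((Xᵀ * X)⁻¹ * (Xᵀ * X)) *ᵥ v := by rw [nonsing_inv_mul _ hdet, one_mulVec]
    _ = (Xᵀ * X)⁻¹ *ᵥ ((Xᵀ * X) *ᵥ v) := by rw [mulVec_mulVec]
    _ = 0 := by rw [h0, mulVec_zero]

-- Sherman–Morrison
lemma sm_inv {A : Matrix (Fin d) (Fin d) ℝ} (hA : IsUnit A) (x : Fin d → ℝ) (t : ℝ)
    (ht : 1 + t * (x ⬝ᵥ A⁻¹ *ᵥ x) ≠ 0) :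
    (A + t • vecMulVec x x)⁻¹
      = A⁻¹ - (t / (1 + t * (x ⬝ᵥ A⁻¹ *ᵥ x))) • (A⁻¹ * vecMulVec x x * A⁻¹) := by
  set c := x ⬝ᵥ A⁻¹ *ᵥ x
  set M := vecMulVec x x
  have hdet : IsUnit A.det := (isUnit_iff_isUnit_det _).mp hA
  have h1 : A * A⁻¹ = 1 := mul_nonsing_inv _ hdet
  apply inv_eq_right_inv
  have hMAM : M * A⁻¹ * M = c • M := by
    exact vmv_sandwich x A⁻¹
  set s := t / (1 + t * c) with hs
  have e2 : A * (s • (A⁻¹ * M * A⁻¹)) = s • (M * A⁻¹) := by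
    rw [mul_smul_comm, ← mul_assoc, ← mul_assoc, h1, one_mul]
  have e4 : (t • M) * (s • (A⁻¹ * M * A⁻¹)) = (t * s * c) • (M * A⁻¹) := by
    rw [smul_mul_assoc, mul_smul_comm, ← mul_assoc, ← mul_assoc, hMAM,
      smul_mul_assoc, smul_smul, smul_smul]
  have key : (A + t • M) * (A⁻¹ - s • (A⁻¹ * M * A⁻¹))
      = 1 + (t - s - t * s * c) • (M * A⁻¹) := by
    rw [add_mul, mul_sub, mul_sub, h1, e2, e4, smul_mul_assoc, sub_smul, sub_smul]
    abel
  rw [key]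
  have hz : t - s - t * s * c = 0 := by
    rw [hs]; field_simp; ring
  rw [hz, zero_smul, add_zero]


set_option maxHeartbeats 1000000 in
theorem stmt_15 {n d : ℕ} (X : Matrix (Fin n) (Fin d) ℝ) (hX : IsUnit (Xᵀ * X))
    (Y : Fin n → ℝ) (x₁ : Fin d → ℝ) (hx₁ : x₁ ≠ 0) (y₁ : ℝ) :
    Tendsto
      (fun lam : ℝ =>
        lam ^ 2 *
          (x₁ ⬝ᵥ (Xᵀ * X + lam ^ 2 • vecMulVec x₁ x₁)⁻¹.mulVec
              (Xᵀ.mulVec Y + (lam ^ 2 * y₁) • x₁) - y₁))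
      atTop
      (nhds ((x₁ ⬝ᵥ ((Xᵀ * X)⁻¹ * Xᵀ).mulVec Y - y₁) /
        (x₁ ⬝ᵥ (Xᵀ * X)⁻¹.mulVec x₁))) := by
  set A := Xᵀ * X with hAdef
  set M := vecMulVec x₁ x₁ with hMdef
  set c := x₁ ⬝ᵥ A⁻¹ *ᵥ x₁ with hcdef
  set b := x₁ ⬝ᵥ (A⁻¹ * Xᵀ) *ᵥ Y with hbdef
  have hPD : A.PosDef := posDef_of_isUnit hX
  have hc : 0 < c := by
    have := (hPD.inv).dotProduct_mulVec_pos hx₁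
    simpa [hcdef] using this
  have hval : ∀ t : ℝ, 0 < t →
      x₁ ⬝ᵥ (A + t • M)⁻¹ *ᵥ (Xᵀ *ᵥ Y + (t * y₁) • x₁) - y₁ = (b - y₁) / (1 + t * c) := by
    intro t ht
    have hne : (1 : ℝ) + t * c ≠ 0 := by nlinarith
    rw [sm_inv hX x₁ t hne]
    set v := Xᵀ *ᵥ Y + (t * y₁) • x₁ with hvdef
    have hq : x₁ ⬝ᵥ A⁻¹ *ᵥ v = b + t * y₁ * c := by
      rw [hvdef, mulVec_add, dotProduct_add, mulVec_smul, dotProduct_smul,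
        hbdef, hcdef, ← mulVec_mulVec, smul_eq_mul]
    have h2 : x₁ ⬝ᵥ ((t / (1 + t * c)) • (A⁻¹ * M * A⁻¹)) *ᵥ v
        = (t / (1 + t * c)) * (c * (b + t * y₁ * c)) := by
      rw [smul_mulVec, dotProduct_smul]
      have : (A⁻¹ * M * A⁻¹) *ᵥ v = (x₁ ⬝ᵥ A⁻¹ *ᵥ v) • (A⁻¹ *ᵥ x₁) := by
        rw [← mulVec_mulVec, ← mulVec_mulVec, hMdef, vecMulVec_mulVec, mulVec_smul]
      rw [this, dotProduct_smul, hq, smul_eq_mul, smul_eq_mul, ← hcdef]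
      ring
    rw [sub_mulVec, dotProduct_sub, hq, h2]
    field_simp
    ring
  have hEv : (fun lam : ℝ =>
        lam ^ 2 *
          (x₁ ⬝ᵥ (A + lam ^ 2 • M)⁻¹ *ᵥ (Xᵀ *ᵥ Y + (lam ^ 2 * y₁) • x₁) - y₁))
      =ᶠ[atTop] fun lam : ℝ => (b - y₁) / ((lam ^ 2)⁻¹ + c) := by
    filter_upwards [eventually_ge_atTop (1 : ℝ)] with lam hlam
    have ht : (0 : ℝ) < lam ^ 2 := by positivity
    rw [hval (lam ^ 2) ht]
    have h1 : (0:ℝ) < 1 + lam ^ 2 * c := by nlinarith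
    have h2 : (0:ℝ) < (lam ^ 2)⁻¹ + c := add_pos (by positivity) hc
    field_simp
  rw [show (b - y₁) / c = (b - y₁) / (0 + c) by rw [zero_add]]
  refine Tendsto.congr' hEv.symm ?_
  exact Tendsto.div tendsto_const_nhds
    (Tendsto.add ((tendsto_pow_atTop (two_ne_zero)).inv_tendsto_atTop) tendsto_const_nhds)
    (by simpa using hc.ne')
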